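/- Let ω : 𝔻 → ℂ be analytic with ω(0) = 0 and |ω(z)| ≤ |z| on 𝔻. Then for |z| = r < 1, |z ω'(z) − ω(z)| ≤ (r² − |ω(z)|²)/(1 − r²). -/

import Mathlib

open Metric

section DieudonneAux
open Complex

lemma normSq_lt_one {a : ℂ} (ha : ‖a‖ < 1) : normSq a < 1 := by
  rw [normSq_eq_norm_sq]
  nlinarith [norm_nonneg a]

lemma mob_den_ne {a w : ℂ} (ha : ‖a‖ < 1) (hw : ‖w‖ < 1) : (1 : ℂ) - (starRingEnd ℂ) a * w ≠ 0 := by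
  intro h
  have h1 : ‖(starRingEnd ℂ) a * w‖ < 1 := by
    rw [norm_mul, RCLike.norm_conj]
    nlinarith [norm_nonneg a, norm_nonneg w]
  have : (starRingEnd ℂ) a * w = 1 := by linear_combination -h
  rw [this, norm_one] at h1
  exact lt_irrefl _ h1

lemma mob_key (a w : ℂ) : normSq (1 - (starRingEnd ℂ) a * w) - normSq (w - a)
    = (1 - normSq a) * (1 - normSq w) := by
  simp only [normSq_apply, Complex.sub_re, Complex.sub_im, Complex.one_re, Complex.one_im,
    Complex.mul_re, Complex.mul_im, Complex.conj_re, Complex.conj_im]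
  ring

lemma mob_lt {a w : ℂ} (ha : ‖a‖ < 1) (hw : ‖w‖ < 1) :
    ‖(w - a) / (1 - (starRingEnd ℂ) a * w)‖ < 1 := by
  have hden := mob_den_ne ha hw
  rw [norm_div, div_lt_one (norm_pos_iff.mpr hden)]
  have key := mob_key a w
  have h1 := normSq_lt_one ha
  have h2 := normSq_lt_one hw
  have hlt : normSq (w - a) < normSq (1 - (starRingEnd ℂ) a * w) := by nlinarith
  have := Real.sqrt_lt_sqrt (normSq_nonneg _) hlt
  rwa [← Complex.norm_def, ← Complex.norm_def] at this

lemma mob_hasDerivAt (a p : ℂ) (h : (1:ℂ) - (starRingEnd ℂ) a * p ≠ 0) :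
    HasDerivAt (fun w => (w - a) / (1 - (starRingEnd ℂ) a * w))
      ((1 - (starRingEnd ℂ) a * a) / (1 - (starRingEnd ℂ) a * p) ^ 2) p := by
  have hn : HasDerivAt (fun w : ℂ => w - a) 1 p := (hasDerivAt_id p).sub_const a
  have hdd : HasDerivAt (fun w : ℂ => (1:ℂ) - (starRingEnd ℂ) a * w) (-(starRingEnd ℂ) a) p := by
    simpa using ((hasDerivAt_id p).const_mul ((starRingEnd ℂ) a)).const_sub 1
  have := hn.fun_div hdd h
  exact this.congr_deriv (by ring)

lemma pick_strict (f : ℂ → ℂ) (hd : DifferentiableOn ℂ f (ball (0:ℂ) 1))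
    (hb : ∀ w ∈ ball (0:ℂ) 1, ‖f w‖ < 1) {z : ℂ} (hz : z ∈ ball (0:ℂ) 1) :
    ‖deriv f z‖ * (1 - ‖z‖ ^ 2) ≤ 1 - ‖f z‖ ^ 2 := by
  rw [mem_ball_zero_iff] at hz
  set a := f z with ha_def
  have ha : ‖a‖ < 1 := hb z (mem_ball_zero_iff.mpr hz)
  set μ : ℂ → ℂ := fun w => (w - (-z)) / (1 - (starRingEnd ℂ) (-z) * w) with hμ
  set σ : ℂ → ℂ := fun w => (w - a) / (1 - (starRingEnd ℂ) a * w) with hσ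
  have hz' : ‖-z‖ < 1 := by rwa [norm_neg]
  have hμmaps : Set.MapsTo μ (ball (0:ℂ) 1) (ball (0:ℂ) 1) := fun w hw => by
    rw [mem_ball_zero_iff] at hw ⊢; exact mob_lt hz' hw
  have hσmaps : Set.MapsTo σ (ball (0:ℂ) 1) (ball (0:ℂ) 1) := fun w hw => by
    rw [mem_ball_zero_iff] at hw ⊢; exact mob_lt ha hw
  set F : ℂ → ℂ := σ ∘ f ∘ μ with hF
  have hμ0 : μ 0 = z := by simp [hμ]
  have hσa : σ a = 0 := by simp [hσ]
  have hF0 : F 0 = 0 := by simp [hF, hμ0, ← ha_def, hσa]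
  -- differentiability of F on ball
  have hdμ : DifferentiableOn ℂ μ (ball (0:ℂ) 1) := by
    intro w hw
    exact ((mob_hasDerivAt (-z) w (mob_den_ne hz' (mem_ball_zero_iff.mp hw))).differentiableAt).differentiableWithinAt
  have hdσ : DifferentiableOn ℂ σ (ball (0:ℂ) 1) := by
    intro w hw
    exact ((mob_hasDerivAt a w (mob_den_ne ha (mem_ball_zero_iff.mp hw))).differentiableAt).differentiableWithinAt
  have hdF : DifferentiableOn ℂ F (ball (0:ℂ) 1) :=
    (hdσ.comp (hd.comp hdμ hμmaps) ((hb · ·) |> fun h => fun w hw => mem_ball_zero_iff.mpr (hb (μ w) (hμmaps hw))))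
  have hFmaps : Set.MapsTo F (ball (0:ℂ) 1) (ball (F 0) 1) := by
    rw [hF0]
    exact fun w hw => hσmaps (mem_ball_zero_iff.mpr (hb (μ w) (hμmaps hw)))
  have hball0 : (0:ℂ) ∈ ball (0:ℂ) 1 := mem_ball_self one_pos
  have key : ‖deriv F 0‖ ≤ 1 := by
    have := Complex.norm_deriv_le_div_of_mapsTo_ball hdF (hFmaps.mono_right ball_subset_closedBall) one_pos
    simpa using this
  -- compute deriv F 0
  have hden1 : (1:ℂ) - (starRingEnd ℂ) (-z) * 0 ≠ 0 := by simp
  have hμd : HasDerivAt μ (1 - (starRingEnd ℂ) z * z) 0 := by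
    have := mob_hasDerivAt (-z) 0 hden1
    convert this using 1
    simp
  have hfd : HasDerivAt f (deriv f z) z :=
    (hd.differentiableAt (isOpen_ball.mem_nhds (mem_ball_zero_iff.mpr hz))).hasDerivAt
  have hdena : (1:ℂ) - (starRingEnd ℂ) a * a ≠ 0 := mob_den_ne ha ha
  have hσd : HasDerivAt σ (1 / (1 - (starRingEnd ℂ) a * a)) a := by
    have := mob_hasDerivAt a a hdena
    convert this using 1
    field_simp
  have h1 : HasDerivAt (f ∘ μ) (deriv f z * (1 - (starRingEnd ℂ) z * z)) 0 :=
    HasDerivAt.comp 0 (by rw [hμ0]; exact hfd) hμd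
  have hFd : HasDerivAt F ((1 / (1 - (starRingEnd ℂ) a * a)) * (deriv f z * (1 - (starRingEnd ℂ) z * z))) 0 :=
    HasDerivAt.comp 0 (by show HasDerivAt σ _ ((f ∘ μ) 0); simp only [Function.comp_apply, hμ0, ← ha_def]; exact hσd) h1
  rw [hFd.deriv] at key
  -- turn into real inequality
  have e1 : (starRingEnd ℂ) z * z = ((‖z‖ ^ 2 : ℝ) : ℂ) := by
    rw [mul_comm, Complex.mul_conj]
    norm_cast
    rw [Complex.normSq_eq_norm_sq]
  have e2 : (starRingEnd ℂ) a * a = ((‖a‖ ^ 2 : ℝ) : ℂ) := by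
    rw [mul_comm, Complex.mul_conj]
    norm_cast
    rw [Complex.normSq_eq_norm_sq]
  rw [e1, e2] at key
  have hz2 : (0:ℝ) < 1 - ‖z‖ ^ 2 := by nlinarith [norm_nonneg z]
  have ha2 : (0:ℝ) < 1 - ‖a‖ ^ 2 := by nlinarith [norm_nonneg a]
  have n1 : ‖(1:ℂ) - ((‖z‖ ^ 2 : ℝ) : ℂ)‖ = 1 - ‖z‖ ^ 2 := by
    rw [show (1:ℂ) - ((‖z‖ ^ 2 : ℝ) : ℂ) = (((1 - ‖z‖ ^ 2 : ℝ)) : ℂ) by push_cast; ring,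
      Complex.norm_real, Real.norm_eq_abs, abs_of_pos hz2]
  have n2 : ‖(1:ℂ) - ((‖a‖ ^ 2 : ℝ) : ℂ)‖ = 1 - ‖a‖ ^ 2 := by
    rw [show (1:ℂ) - ((‖a‖ ^ 2 : ℝ) : ℂ) = (((1 - ‖a‖ ^ 2 : ℝ)) : ℂ) by push_cast; ring,
      Complex.norm_real, Real.norm_eq_abs, abs_of_pos ha2]
  rw [norm_mul, norm_mul, norm_div, norm_one, n1, n2] at key
  rw [div_mul_eq_mul_div, div_le_one ha2, one_mul] at key
  linarith [key]

lemma pick (f : ℂ → ℂ) (hd : DifferentiableOn ℂ f (ball (0:ℂ) 1))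
    (hb : ∀ w ∈ ball (0:ℂ) 1, ‖f w‖ ≤ 1) {z : ℂ} (hz : z ∈ ball (0:ℂ) 1) :
    ‖deriv f z‖ * (1 - ‖z‖ ^ 2) ≤ 1 - ‖f z‖ ^ 2 := by
  have hstep : ∀ t : ℝ, 0 < t → t < 1 →
      t * (‖deriv f z‖ * (1 - ‖z‖ ^ 2)) + t ^ 2 * ‖f z‖ ^ 2 ≤ 1 := by
    intro t ht0 ht1
    have hdt : DifferentiableOn ℂ (fun w => (t:ℂ) * f w) (ball (0:ℂ) 1) :=
      fun w hw => ((hd w hw).const_mul _)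
    have hbt : ∀ w ∈ ball (0:ℂ) 1, ‖(t:ℂ) * f w‖ < 1 := by
      intro w hw
      rw [norm_mul, Complex.norm_real, Real.norm_eq_abs, abs_of_pos ht0]
      nlinarith [hb w hw, norm_nonneg (f w)]
    have h := pick_strict _ hdt hbt hz
    have hder : deriv (fun w => (t:ℂ) * f w) z = (t:ℂ) * deriv f z :=
      deriv_const_mul _ (hd.differentiableAt (isOpen_ball.mem_nhds hz))
    rw [hder, norm_mul, norm_mul, Complex.norm_real, Real.norm_eq_abs, abs_of_pos ht0] at h
    nlinarith [h, norm_nonneg (f z), norm_nonneg z, mem_ball_zero_iff.mp hz]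
  have hlim : Filter.Tendsto
      (fun t : ℝ => t * (‖deriv f z‖ * (1 - ‖z‖ ^ 2)) + t ^ 2 * ‖f z‖ ^ 2)
      (nhdsWithin 1 (Set.Iio 1)) (nhds (‖deriv f z‖ * (1 - ‖z‖ ^ 2) + ‖f z‖ ^ 2)) := by
    apply Filter.Tendsto.mono_left _ nhdsWithin_le_nhds
    have hc : Continuous (fun t : ℝ => t * (‖deriv f z‖ * (1 - ‖z‖ ^ 2)) + t ^ 2 * ‖f z‖ ^ 2) := by
      continuity
    simpa using hc.tendsto 1
  have hfin : ‖deriv f z‖ * (1 - ‖z‖ ^ 2) + ‖f z‖ ^ 2 ≤ 1 := by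
    refine le_of_tendsto hlim ?_
    filter_upwards [Ioo_mem_nhdsLT_of_mem (Set.mem_Ioc.mpr ⟨one_pos, le_rfl⟩)] with t ht
    exact hstep t ht.1 ht.2
  linarith

end DieudonneAux

/-- Dieudonné's inequality |zω'(z) − ω(z)| ≤ (r² − |ω(z)|²)/(1 − r²) for a Schwarz function. -/
theorem dieudonne_ineq (ω : ℂ → ℂ)
    (hd : DifferentiableOn ℂ ω (ball (0:ℂ) 1))
    (h0 : ω 0 = 0)
    (hb : ∀ z ∈ ball (0:ℂ) 1, ‖ω z‖ ≤ ‖z‖) :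
    ∀ z ∈ ball (0:ℂ) 1,
      ‖z * deriv ω z - ω z‖ ≤ (‖z‖ ^ 2 - ‖ω z‖ ^ 2) / (1 - ‖z‖ ^ 2) := by
  intro z hz
  rcases eq_or_ne z 0 with rfl | hz0
  · simp [h0]
  -- the Schwarz quotient
  set h : ℂ → ℂ := dslope ω 0 with hh
  have hmem : ball (0:ℂ) 1 ∈ nhds (0:ℂ) := isOpen_ball.mem_nhds (mem_ball_self one_pos)
  have hdh : DifferentiableOn ℂ h (ball (0:ℂ) 1) :=
    (Complex.differentiableOn_dslope hmem).mpr hd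
  have hmaps : Set.MapsTo ω (ball (0:ℂ) 1) (ball (ω 0) 1) := by
    intro w hw
    rw [h0, mem_ball_zero_iff]
    exact lt_of_le_of_lt (hb w hw) (mem_ball_zero_iff.mp hw)
  have hbh : ∀ w ∈ ball (0:ℂ) 1, ‖h w‖ ≤ 1 := by
    intro w hw
    rcases eq_or_ne w 0 with rfl | hw0
    · rw [hh, dslope_same]
      have := Complex.norm_deriv_le_div_of_mapsTo_ball hd (hmaps.mono_right ball_subset_closedBall) one_pos
      simpa using this
    · rw [hh, dslope_of_ne _ hw0, slope_def_field, h0, sub_zero, sub_zero, div_eq_mul_inv,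
        norm_mul, norm_inv]
      rw [mul_inv_le_iff₀ (norm_pos_iff.mpr hw0), one_mul]
      exact hb w hw
  have hpick := pick h hdh hbh hz
  -- compute h z and deriv h z
  have hrz : ‖z‖ < 1 := mem_ball_zero_iff.mp hz
  have hhz : h z = ω z / z := by
    rw [hh, dslope_of_ne _ hz0, slope_def_field, h0, sub_zero, sub_zero]
  have hEq : h =ᶠ[nhds z] fun w => ω w / w := by
    filter_upwards [isOpen_compl_singleton.mem_nhds hz0] with w hw
    rw [hh, dslope_of_ne _ hw, slope_def_field, h0, sub_zero, sub_zero]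
  have hωd : HasDerivAt ω (deriv ω z) z :=
    (hd.differentiableAt (isOpen_ball.mem_nhds hz)).hasDerivAt
  have hdiv : HasDerivAt (fun w => ω w / w) ((deriv ω z * z - ω z * 1) / z ^ 2) z :=
    hωd.div (hasDerivAt_id z) hz0
  have hderh : deriv h z = (z * deriv ω z - ω z) / z ^ 2 := by
    rw [hEq.deriv_eq, hdiv.deriv]
    ring_nf
  -- norms
  have hz2 : (0:ℝ) < 1 - ‖z‖ ^ 2 := by nlinarith [norm_nonneg z]
  have hzn : (0:ℝ) < ‖z‖ := norm_pos_iff.mpr hz0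
  rw [hderh, hhz] at hpick
  rw [norm_div, norm_div, norm_pow] at hpick
  have hr2 : (0:ℝ) < ‖z‖ ^ 2 := by positivity
  have key := mul_le_mul_of_nonneg_right hpick hr2.le
  rw [le_div_iff₀ hz2]
  calc ‖z * deriv ω z - ω z‖ * (1 - ‖z‖ ^ 2)
      = ‖z * deriv ω z - ω z‖ / ‖z‖ ^ 2 * (1 - ‖z‖ ^ 2) * ‖z‖ ^ 2 := by
        rw [div_mul_eq_mul_div, div_mul_cancel₀ _ hr2.ne']
    _ ≤ (1 - (‖ω z‖ / ‖z‖) ^ 2) * ‖z‖ ^ 2 := key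
    _ = ‖z‖ ^ 2 - ‖ω z‖ ^ 2 := by
        rw [one_sub_mul, div_pow, div_mul_cancel₀ _ hr2.ne']
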